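/- Let W be a multigraphon with ρ(W) ∈ (0,∞), let κ ∈ (0,∞), and for t ∈ [0,∞) let W_t be the multigraphon defined by W_t(x,y,k) = Σ_{h=0}^∞ W(x,y,h)·q(t,h,k, D(W,x)D(W,y)/ρ(W)) for x≠y and W_t(x,x,k) = 1[2|k]·Σ_{h=0}^∞ W(x,x,2h)·q(t,h,k/2, D(W,x)²/(2ρ(W))). Then for every k ∈ ℕ and every A ∈ A_k, the map t ↦ t_=(A, W_t) is continuous on [0,∞) and lim_{t→0+} t_=(A, W_t) = t_=(A, W). -/

import Mathlib

open MeasureTheory Filter Set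
open scoped Classical ENNReal Topology BigOperators

noncomputable section

/-- `B : ℕ → ℕ → ℕ` is the adjacency matrix of a multigraph on vertex set `{0,…,n-1}`:
symmetric, even diagonal entries (loops counted twice), vanishing outside `[0,n)²`. -/
def IsAdjOn (n : ℕ) (B : ℕ → ℕ → ℕ) : Prop :=
  (∀ i j, B i j = B j i) ∧ (∀ i, 2 ∣ B i i) ∧ ∀ i j, n ≤ i ∨ n ≤ j → B i j = 0

/-- Degree `d(B,i)` of vertex `i` in a multigraph on `n` vertices. -/
def degB (n : ℕ) (B : ℕ → ℕ → ℕ) (i : ℕ) : ℕ := ∑ j ∈ Finset.range n, B i j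

/-- Adjacency matrix of a multigraph on `n` vertices with `m` edges. -/
def IsAdjOnM (n m : ℕ) (B : ℕ → ℕ → ℕ) : Prop :=
  IsAdjOn n B ∧ ∑ i ∈ Finset.range n, ∑ j ∈ Finset.range n, B i j = 2 * m

/-- Top-left `k × k` submatrix (set to zero outside). -/
def subMat (k : ℕ) (B : ℕ → ℕ → ℕ) : ℕ → ℕ → ℕ :=
  fun i j => if i < k ∧ j < k then B i j else 0

/-- Induced homomorphism density `t_=(A,B)` of a `k`-vertex multigraph in an `n`-vertex one. -/
def tEqB (k n : ℕ) (A B : ℕ → ℕ → ℕ) : ℝ :=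
  ((Finset.univ.filter fun φ : Fin k → Fin n =>
      ∀ i j : Fin k, A i j = B (φ i) (φ j)).card : ℝ) / (n : ℝ) ^ k

/-- A multigraphon: symmetric, probability distribution on ℕ in each fibre over `[0,1]²`,
no odd diagonal values. -/
def IsMultigraphon (W : ℝ → ℝ → ℕ → ℝ) : Prop :=
  Measurable (fun p : ℝ × ℝ × ℕ => W p.1 p.2.1 p.2.2) ∧
  (∀ x y k, 0 ≤ W x y k ∧ W x y k ≤ 1) ∧
  (∀ x y k, W x y k = W y x k) ∧
  (∀ x ∈ Icc (0:ℝ) 1, ∀ y ∈ Icc (0:ℝ) 1, (∑' k : ℕ, W x y k) = 1) ∧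
  (∀ x k, W x x (2 * k + 1) = 0)

/-- Induced homomorphism density `t_=(A,W)` of a multigraph in a multigraphon. -/
def tEqW (k : ℕ) (A : ℕ → ℕ → ℕ) (W : ℝ → ℝ → ℕ → ℝ) : ℝ :=
  ∫ x : Fin k → ℝ in Set.univ.pi (fun _ : Fin k => Icc (0:ℝ) 1),
    ∏ i : Fin k, ∏ j ∈ Finset.univ.filter (fun j : Fin k => i ≤ j),
      W (x i) (x j) (A i j)

/-- The average degree `D(W,x)` of a multigraphon at `x`. -/
def degW (W : ℝ → ℝ → ℕ → ℝ) (x : ℝ) : ℝ :=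
  ∫ y in Icc (0:ℝ) 1, ∑' k : ℕ, (k : ℝ) * W x y k

/-- The edge density `ρ(W)` of a multigraphon. -/
def rhoW (W : ℝ → ℝ → ℕ → ℝ) : ℝ := ∫ x in Icc (0:ℝ) 1, degW W x

/-- One step of the edge reconnecting dynamics: the edge `{vold, w}` is replaced by `{vnew, w}`. -/
def stepER (B : ℕ → ℕ → ℕ) (vold w vnew : ℕ) : ℕ → ℕ → ℕ := fun a b =>
  B a b - (if a = vold ∧ b = w then 1 else 0) - (if a = w ∧ b = vold then 1 else 0)
    + (if a = vnew ∧ b = w then 1 else 0) + (if a = w ∧ b = vnew then 1 else 0)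

/-- Transition probability of the edge reconnecting model with parameter `κ`
on multigraphs with `n` vertices and `m` edges. -/
def transER (κ : ℝ) (n m : ℕ) (B B' : ℕ → ℕ → ℕ) : ℝ :=
  ∑ v ∈ Finset.range n, ∑ w ∈ Finset.range n, ∑ u ∈ Finset.range n,
    ((B v w : ℝ) / (2 * m)) * (((degB n B u : ℝ) + κ) / (2 * m + n * κ)) *
      (if B' = stepER B v w u then 1 else 0)

/-- `(X T)_{T≥0}` is an edge reconnecting model with parameter `κ` on `A_n^m`:
a Markov chain with the edge reconnecting transition probabilities. -/
def IsEdgeReconnecting (κ : ℝ) {Ω : Type*} [MeasurableSpace Ω] (μ : Measure Ω)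
    (n m : ℕ) (X : ℕ → Ω → ℕ → ℕ → ℕ) : Prop :=
  (∀ T i j, Measurable fun ω => X T ω i j) ∧
  (∀ T ω, IsAdjOnM n m (X T ω)) ∧
  ∀ (T : ℕ) (past : ℕ → ℕ → ℕ → ℕ) (B' : ℕ → ℕ → ℕ),
    μ {ω | (∀ S ≤ T, X S ω = past S) ∧ X (T + 1) ω = B'} =
      μ {ω | ∀ S ≤ T, X S ω = past S} * ENNReal.ofReal (transER κ n m (past T) B')

/-- Vertex exchangeability of a random adjacency matrix on `n` vertices. -/
def VertexExchangeable {Ω : Type*} [MeasurableSpace Ω] (μ : Measure Ω)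
    (n : ℕ) (X0 : Ω → ℕ → ℕ → ℕ) : Prop :=
  ∀ τ : Equiv.Perm ℕ, (∀ i, n ≤ i → τ i = i) →
    ∀ B : ℕ → ℕ → ℕ, μ {ω | X0 ω = B} = μ {ω | (fun i j => X0 ω (τ i) (τ j)) = B}

/-- Poisson point probability `p(k,λ)`. -/
def poiP (k : ℕ) (l : ℝ) : ℝ := Real.exp (-l) * l ^ k / (Nat.factorial k : ℝ)

/-- Binomial point probability `b(k,n,p)`. -/
def binP (k n : ℕ) (p : ℝ) : ℝ := (n.choose k : ℝ) * p ^ k * (1 - p) ^ (n - k)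

/-- `q(t,h,k,μ)`: time-`t` transition probability from `h` to `k` of the M/M/∞ queue with
arrival rate `μ` and service rate 1. -/
def qMM (t : ℝ) (h k : ℕ) (μ : ℝ) : ℝ :=
  ∑ l ∈ Finset.range (k + 1), binP l h (Real.exp (-t)) * poiP (k - l) ((1 - Real.exp (-t)) * μ)

/-- The multigraphon `W_t` describing the edge reconnecting model on the `n²` time scale. -/
def WtER (W : ℝ → ℝ → ℕ → ℝ) (t : ℝ) : ℝ → ℝ → ℕ → ℝ := fun x y k =>
  if x = y then
    (if 2 ∣ k then
      ∑' h : ℕ, W x x (2 * h) * qMM t h (k / 2) (degW W x ^ 2 / (2 * rhoW W))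
     else 0)
  else ∑' h : ℕ, W x y h * qMM t h k (degW W x * degW W y / rhoW W)

/-- Gamma density `g(x,α,β)`. -/
def gamP (x α β : ℝ) : ℝ :=
  if 0 < x then x ^ (α - 1) * (β ^ α * Real.exp (-(β * x)) / Real.Gamma α) else 0

/-- `τ(α,t) = α/(e^{αt}-1)`. -/
def tauCIR (α t : ℝ) : ℝ := α / (Real.exp (α * t) - 1)

/-- Transition density `f(t,z,y)` of the Cox–Ingersoll–Ross process with parameters `κ, ρ`. -/
def cirDens (κ ρ t z y : ℝ) : ℝ :=
  ∑' i : ℕ, poiP i (z * tauCIR (κ / ρ) t) * gamP y ((κ : ℝ) + i) (tauCIR (κ / ρ) t + κ / ρ)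

/-- The measure `dF₀` where `F₀(x) = Leb{y ∈ [0,1] : D(W,y) ≤ x}`: the push-forward of
Lebesgue measure on `[0,1]` under the average degree function. -/
def F0meas (W : ℝ → ℝ → ℕ → ℝ) : Measure ℝ :=
  Measure.map (degW W) (volume.restrict (Icc (0:ℝ) 1))

/-- The distribution function `F₀(x) = Leb{y ∈ [0,1] : D(W,y) ≤ x}`. -/
def F0fun (W : ℝ → ℝ → ℕ → ℝ) (x : ℝ) : ℝ :=
  (volume {y ∈ Icc (0:ℝ) 1 | degW W y ≤ x}).toReal

/-- Generalized inverse `F₀⁻¹(x) = min{z : F₀(z) ≥ x}`. -/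
def F0inv (W : ℝ → ℝ → ℕ → ℝ) (x : ℝ) : ℝ := sInf {z : ℝ | x ≤ F0fun W z}

/-- The mixed CIR density `f(t,y) = ∫₀^∞ f(t,z,y) dF₀(z)`. -/
def fCIRmix (κ ρ : ℝ) (W : ℝ → ℝ → ℕ → ℝ) (t y : ℝ) : ℝ :=
  ∫ z, cirDens κ ρ t z y ∂(F0meas W)

/-- The distribution function `F_t(x) = ∫₀ˣ f(t,y) dy`. -/
def Fcir (κ ρ : ℝ) (W : ℝ → ℝ → ℕ → ℝ) (t x : ℝ) : ℝ :=
  ∫ y in Ioc (0:ℝ) x, fCIRmix κ ρ W t y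

/-- Generalized inverse `F_t⁻¹(x) = min{z : F_t(z) ≥ x}`. -/
def FcirInv (κ ρ : ℝ) (W : ℝ → ℝ → ℕ → ℝ) (t x : ℝ) : ℝ :=
  sInf {z : ℝ | x ≤ Fcir κ ρ W t z}

/-- The multigraphon `Ŵ_t` describing the edge reconnecting model on the `n³` time scale. -/
def WhatER (κ : ℝ) (W : ℝ → ℝ → ℕ → ℝ) (t : ℝ) : ℝ → ℝ → ℕ → ℝ := fun x y k =>
  if x = y then
    (if 2 ∣ k then poiP (k / 2) (FcirInv κ (rhoW W) W t x ^ 2 / (2 * rhoW W)) else 0)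
  else poiP k (FcirInv κ (rhoW W) W t x * FcirInv κ (rhoW W) W t y / rhoW W)

/-- The product measure on `ℝ^k` of `k` i.i.d. coordinates with density `f(t,·)`. -/
def cirPi (κ ρ : ℝ) (W : ℝ → ℝ → ℕ → ℝ) (t : ℝ) (k : ℕ) : Measure (Fin k → ℝ) :=
  volume.withDensity fun z => ∏ i : Fin k, ENNReal.ofReal (fCIRmix κ ρ W t (z i))

/-- Condition (E): uniform exponential moment bound for the initial multigraphs. -/
def CondE (B : (n : ℕ) → ℕ → ℕ → ℕ) : Prop :=
  ∃ lam : ℝ, 0 < lam ∧ ∃ C : ℝ, ∀ n : ℕ,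
    (∑ i ∈ Finset.range n, ∑ j ∈ (Finset.range n).filter (fun j => i < j),
        Real.exp (lam * (B n i j : ℝ))) ≤ C * (n.choose 2 : ℝ) ∧
    (∑ i ∈ Finset.range n, Real.exp (lam * (B n i i : ℝ))) ≤ C * (n : ℝ)

/-- Convergence `B_n → W` of a sequence of multigraphs to a multigraphon. -/
def GraphSeqConvTo (B : (n : ℕ) → ℕ → ℕ → ℕ) (W : ℝ → ℝ → ℕ → ℝ) : Prop :=
  ∀ (k : ℕ) (A : ℕ → ℕ → ℕ), IsAdjOn k A →
    Tendsto (fun n => tEqB k n A (B n)) atTop (𝓝 (tEqW k A W))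


lemma my_tsum_eq_toReal {f : ℕ → ℝ} (hf : ∀ n, 0 ≤ f n) :
    ∑' n, f n = (∑' n, ENNReal.ofReal (f n)).toReal := by
  by_cases h : Summable f
  · rw [← ENNReal.ofReal_tsum_of_nonneg hf h, ENNReal.toReal_ofReal (tsum_nonneg hf)]
  · rw [tsum_eq_zero_of_not_summable h]
    by_cases h2 : (∑' n, ENNReal.ofReal (f n)) = ∞
    · rw [h2]; rfl
    · exact absurd ((ENNReal.summable_toReal h2).congr
        (fun n => ENNReal.toReal_ofReal (hf n))) h

lemma my_poiP_nonneg {l : ℝ} (hl : 0 ≤ l) (k : ℕ) : 0 ≤ poiP k l := by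
  unfold poiP; positivity

lemma my_poiP_le_one {l : ℝ} (hl : 0 ≤ l) (k : ℕ) : poiP k l ≤ 1 := by
  unfold poiP
  rw [mul_div_assoc]
  calc Real.exp (-l) * (l ^ k / (Nat.factorial k : ℝ))
      ≤ Real.exp (-l) * Real.exp l :=
        mul_le_mul_of_nonneg_left (Real.pow_div_factorial_le_exp l hl k) (Real.exp_pos _).le
    _ = 1 := by rw [← Real.exp_add]; simp

lemma my_binP_nonneg {p : ℝ} (h0 : 0 ≤ p) (h1 : p ≤ 1) (k n : ℕ) : 0 ≤ binP k n p := by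
  have : (0:ℝ) ≤ 1 - p := by linarith
  unfold binP; positivity

lemma my_sum_binP_le_one {p : ℝ} (h0 : 0 ≤ p) (h1 : p ≤ 1) (n m : ℕ) :
    ∑ l ∈ Finset.range m, binP l n p ≤ 1 := by
  have key : ∑ l ∈ Finset.range (n + 1), binP l n p = 1 := by
    calc ∑ l ∈ Finset.range (n + 1), binP l n p
        = ∑ l ∈ Finset.range (n + 1), p ^ l * (1 - p) ^ (n - l) * (n.choose l : ℝ) :=
          Finset.sum_congr rfl fun l _ => by unfold binP; ring
      _ = (p + (1 - p)) ^ n := (add_pow p (1 - p) n).symm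
      _ = 1 := by norm_num
  calc ∑ l ∈ Finset.range m, binP l n p
      ≤ ∑ l ∈ Finset.range (m + n + 1), binP l n p := by
        apply Finset.sum_le_sum_of_subset_of_nonneg
        · exact Finset.range_subset_range.2 (by omega)
        · exact fun l _ _ => my_binP_nonneg h0 h1 l n
    _ = ∑ l ∈ Finset.range (n + 1), binP l n p := by
        symm
        apply Finset.sum_subset (Finset.range_subset_range.2 (by omega))
        intro l _ hl
        have : n < l := by simpa using Nat.lt_of_succ_le (not_lt.1 (by simpa using hl))
        unfold binP
        rw [Nat.choose_eq_zero_of_lt this]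
        simp
    _ = 1 := key

lemma my_qMM_nonneg {t μ : ℝ} (ht : 0 ≤ t) (hμ : 0 ≤ μ) (h k : ℕ) : 0 ≤ qMM t h k μ := by
  have hp0 : (0:ℝ) ≤ Real.exp (-t) := (Real.exp_pos _).le
  have hp1 : Real.exp (-t) ≤ 1 := Real.exp_le_one_iff.2 (by linarith)
  have hl : 0 ≤ (1 - Real.exp (-t)) * μ := mul_nonneg (by linarith) hμ
  exact Finset.sum_nonneg fun l _ =>
    mul_nonneg (my_binP_nonneg hp0 hp1 l h) (my_poiP_nonneg hl _)

lemma my_qMM_le_one {t μ : ℝ} (ht : 0 ≤ t) (hμ : 0 ≤ μ) (h k : ℕ) : qMM t h k μ ≤ 1 := by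
  have hp0 : (0:ℝ) ≤ Real.exp (-t) := (Real.exp_pos _).le
  have hp1 : Real.exp (-t) ≤ 1 := Real.exp_le_one_iff.2 (by linarith)
  have hl : 0 ≤ (1 - Real.exp (-t)) * μ := mul_nonneg (by linarith) hμ
  calc qMM t h k μ ≤ ∑ l ∈ Finset.range (k + 1), binP l h (Real.exp (-t)) := by
        apply Finset.sum_le_sum
        intro l _
        calc binP l h (Real.exp (-t)) * poiP (k - l) ((1 - Real.exp (-t)) * μ)
            ≤ binP l h (Real.exp (-t)) * 1 :=
              mul_le_mul_of_nonneg_left (my_poiP_le_one hl _) (my_binP_nonneg hp0 hp1 l h)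
          _ = _ := mul_one _
    _ ≤ 1 := my_sum_binP_le_one hp0 hp1 h (k + 1)

lemma my_poiP_zero (m : ℕ) : poiP m 0 = if m = 0 then 1 else 0 := by
  unfold poiP
  rcases Nat.eq_zero_or_pos m with hm | hm
  · subst hm; simp
  · rw [zero_pow (by omega), if_neg (by omega)]; simp

lemma my_qMM_zero (h k : ℕ) (μ : ℝ) : qMM 0 h k μ = if h = k then 1 else 0 := by
  unfold qMM
  rw [Finset.sum_eq_single k]
  · simp only [neg_zero, Real.exp_zero, sub_self, zero_mul, my_poiP_zero,
      Nat.sub_self, if_pos rfl, mul_one]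
    unfold binP
    rcases eq_or_ne h k with rfl | hne
    · simp
    · rw [if_neg hne]
      rcases lt_or_gt_of_ne hne with hlt | hgt
      · rw [Nat.choose_eq_zero_of_lt hlt]; simp
      · rw [sub_self, zero_pow (show h - k ≠ 0 by omega)]; ring
  · intro l hl hlk
    have : 0 < k - l := by
      simp only [Finset.mem_range] at hl; omega
    rw [neg_zero, Real.exp_zero, sub_self, zero_mul, my_poiP_zero, if_neg (by omega), mul_zero]
  · intro hk; exact absurd (Finset.self_mem_range_succ k) hk

lemma my_continuous_poiP (m : ℕ) : Continuous fun l : ℝ => poiP m l := by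
  unfold poiP; fun_prop

lemma my_continuous_binP (l h : ℕ) : Continuous fun p : ℝ => binP l h p := by
  unfold binP; fun_prop

lemma my_continuous_qMM_t (h k : ℕ) (μ : ℝ) : Continuous fun t : ℝ => qMM t h k μ := by
  unfold qMM
  apply continuous_finset_sum
  intro l _
  exact ((my_continuous_binP l h).comp (Real.continuous_exp.comp continuous_neg)).mul
    ((my_continuous_poiP (k - l)).comp
      (((continuous_const.sub (Real.continuous_exp.comp continuous_neg)).mul continuous_const)))

lemma my_continuous_qMM_mu (t : ℝ) (h k : ℕ) : Continuous fun μ : ℝ => qMM t h k μ := by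
  unfold qMM
  apply continuous_finset_sum
  intro l _
  exact continuous_const.mul ((my_continuous_poiP (k - l)).comp (continuous_const.mul continuous_id))



section Helpers

variable {W : ℝ → ℝ → ℕ → ℝ}

lemma my_summable_W (hW : IsMultigraphon W) {x y : ℝ} (hx : x ∈ Icc (0:ℝ) 1)
    (hy : y ∈ Icc (0:ℝ) 1) : Summable (fun h => W x y h) := by
  by_contra hs
  have h0 := tsum_eq_zero_of_not_summable hs
  rw [hW.2.2.2.1 x hx y hy] at h0
  norm_num at h0

lemma my_W_nonneg (hW : IsMultigraphon W) (x y : ℝ) (n : ℕ) : 0 ≤ W x y n := (hW.2.1 x y n).1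

lemma my_degW_nonneg (hW : IsMultigraphon W) (x : ℝ) : 0 ≤ degW W x :=
  setIntegral_nonneg measurableSet_Icc fun y _ =>
    tsum_nonneg fun n => mul_nonneg (Nat.cast_nonneg n) (my_W_nonneg hW x y n)

lemma my_two_mul_inj : Function.Injective (fun n : ℕ => 2 * n) := fun a b h => by dsimp at h; omega

lemma my_summable_even (hW : IsMultigraphon W) {x : ℝ} (hx : x ∈ Icc (0:ℝ) 1) :
    Summable (fun h => W x x (2 * h)) :=
  (my_summable_W hW hx hx).comp_injective my_two_mul_inj

lemma my_measurable_tsum_of_nonneg {α : Type*} [MeasurableSpace α] {f : ℕ → α → ℝ}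
    (hm : ∀ n, Measurable (f n)) (h0 : ∀ n a, 0 ≤ f n a) :
    Measurable (fun a => ∑' n, f n a) := by
  have heq : (fun a => ∑' n, f n a) = fun a => (∑' n, ENNReal.ofReal (f n a)).toReal := by
    funext a; exact my_tsum_eq_toReal (fun n => h0 n a)
  rw [heq]
  exact (Measurable.ennreal_tsum fun n => ENNReal.measurable_ofReal.comp (hm n)).ennreal_toReal

lemma my_measurable_W_pair (hW : IsMultigraphon W) (n : ℕ) :
    Measurable (fun p : ℝ × ℝ => W p.1 p.2 n) :=
  hW.1.comp (measurable_fst.prodMk (measurable_snd.prodMk measurable_const))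

lemma my_measurable_degW (hW : IsMultigraphon W) : Measurable (degW W) := by
  have hg : Measurable (fun p : ℝ × ℝ => ∑' n : ℕ, (n : ℝ) * W p.1 p.2 n) :=
    my_measurable_tsum_of_nonneg
      (fun n => measurable_const.mul (my_measurable_W_pair hW n))
      (fun n p => mul_nonneg (Nat.cast_nonneg n) (my_W_nonneg hW _ _ n))
  exact (hg.stronglyMeasurable.integral_prod_right'
    (ν := volume.restrict (Icc (0:ℝ) 1))).measurable

lemma my_WtER_nonneg (hW : IsMultigraphon W) (hρ : 0 < rhoW W) {t : ℝ} (ht : 0 ≤ t)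
    (x y : ℝ) (m : ℕ) : 0 ≤ WtER W t x y m := by
  unfold WtER
  split_ifs with hxy hm
  · exact tsum_nonneg fun h => mul_nonneg (my_W_nonneg hW _ _ _)
      (my_qMM_nonneg ht (div_nonneg (pow_nonneg (my_degW_nonneg hW x) 2) (by linarith)) _ _)
  · exact le_refl 0
  · exact tsum_nonneg fun h => mul_nonneg (my_W_nonneg hW _ _ _)
      (my_qMM_nonneg ht (div_nonneg
        (mul_nonneg (my_degW_nonneg hW x) (my_degW_nonneg hW y)) hρ.le) _ _)

lemma my_WtER_le_one (hW : IsMultigraphon W) (hρ : 0 < rhoW W) {t : ℝ} (ht : 0 ≤ t)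
    {x y : ℝ} (hx : x ∈ Icc (0:ℝ) 1) (hy : y ∈ Icc (0:ℝ) 1) (m : ℕ) :
    WtER W t x y m ≤ 1 := by
  unfold WtER
  split_ifs with hxy hm
  · subst hxy
    have hμ : 0 ≤ degW W x ^ 2 / (2 * rhoW W) :=
      div_nonneg (pow_nonneg (my_degW_nonneg hW x) 2) (by linarith)
    have hse := my_summable_even hW hx
    have hterm : ∀ h : ℕ, W x x (2 * h) * qMM t h (m / 2) (degW W x ^ 2 / (2 * rhoW W))
        ≤ W x x (2 * h) := fun h => by
      calc W x x (2 * h) * qMM t h (m / 2) (degW W x ^ 2 / (2 * rhoW W))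
          ≤ W x x (2 * h) * 1 :=
            mul_le_mul_of_nonneg_left (my_qMM_le_one ht hμ _ _) (my_W_nonneg hW _ _ _)
        _ = _ := mul_one _
    have hsum : Summable (fun h => W x x (2 * h) *
        qMM t h (m / 2) (degW W x ^ 2 / (2 * rhoW W))) :=
      Summable.of_nonneg_of_le (fun h => mul_nonneg (my_W_nonneg hW _ _ _)
        (my_qMM_nonneg ht hμ _ _)) hterm hse
    calc (∑' h, W x x (2 * h) * qMM t h (m / 2) (degW W x ^ 2 / (2 * rhoW W)))
        ≤ ∑' h, W x x (2 * h) := Summable.tsum_le_tsum hterm hsum hse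
      _ ≤ ∑' n, W x x n := by
          apply Summable.tsum_le_tsum_of_inj (fun n : ℕ => 2 * n) my_two_mul_inj
          · exact fun c _ => my_W_nonneg hW _ _ c
          · exact fun h => le_refl _
          · exact hse
          · exact my_summable_W hW hx hx
      _ = 1 := hW.2.2.2.1 x hx x hx
  · exact zero_le_one
  · have hμ : 0 ≤ degW W x * degW W y / rhoW W :=
      div_nonneg (mul_nonneg (my_degW_nonneg hW x) (my_degW_nonneg hW y)) hρ.le
    have hsw := my_summable_W hW hx hy
    have hterm : ∀ h : ℕ, W x y h * qMM t h m (degW W x * degW W y / rhoW W) ≤ W x y h :=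
      fun h => by
        calc W x y h * qMM t h m (degW W x * degW W y / rhoW W) ≤ W x y h * 1 :=
              mul_le_mul_of_nonneg_left (my_qMM_le_one ht hμ _ _) (my_W_nonneg hW _ _ _)
          _ = _ := mul_one _
    have hsum : Summable (fun h => W x y h * qMM t h m (degW W x * degW W y / rhoW W)) :=
      Summable.of_nonneg_of_le (fun h => mul_nonneg (my_W_nonneg hW _ _ _)
        (my_qMM_nonneg ht hμ _ _)) hterm hsw
    calc (∑' h, W x y h * qMM t h m (degW W x * degW W y / rhoW W))
        ≤ ∑' h, W x y h := Summable.tsum_le_tsum hterm hsum hsw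
      _ = 1 := hW.2.2.2.1 x hx y hy

lemma my_WtER_zero (hW : IsMultigraphon W) : WtER W 0 = W := by
  funext x y m
  unfold WtER
  split_ifs with hxy hm
  · subst hxy
    rw [tsum_eq_single (m / 2)]
    · rw [my_qMM_zero, if_pos rfl, mul_one, Nat.mul_div_cancel' hm]
    · intro h hne
      rw [my_qMM_zero, if_neg hne, mul_zero]
  · subst hxy
    obtain ⟨c, hc⟩ := Nat.odd_iff.2 (Nat.two_dvd_ne_zero.1 hm)
    rw [hc]
    exact (hW.2.2.2.2 x c).symm
  · rw [tsum_eq_single m]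
    · rw [my_qMM_zero, if_pos rfl, mul_one]
    · intro h hne
      rw [my_qMM_zero, if_neg hne, mul_zero]

lemma my_measurable_WtER (hW : IsMultigraphon W) (hρ : 0 < rhoW W) {t : ℝ} (ht : 0 ≤ t)
    (m : ℕ) : Measurable (fun p : ℝ × ℝ => WtER W t p.1 p.2 m) := by
  unfold WtER
  have hd : Measurable (degW W) := my_measurable_degW hW
  apply Measurable.ite (measurableSet_eq_fun measurable_fst measurable_snd)
  · by_cases hm : 2 ∣ m
    · simp only [if_pos hm]
      apply my_measurable_tsum_of_nonneg
      · intro h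
        refine Measurable.mul ?_ ?_
        · exact hW.1.comp (measurable_fst.prodMk (measurable_fst.prodMk measurable_const))
        · exact (my_continuous_qMM_mu t h (m / 2)).measurable.comp
            (((hd.comp measurable_fst).pow_const 2).div_const _)
      · intro h p
        exact mul_nonneg (my_W_nonneg hW _ _ _) (my_qMM_nonneg ht
          (div_nonneg (pow_nonneg (my_degW_nonneg hW _) 2) (by linarith)) _ _)
    · simp only [if_neg hm]
      exact measurable_const
  · apply my_measurable_tsum_of_nonneg
    · intro h
      refine Measurable.mul (my_measurable_W_pair hW h) ?_
      exact (my_continuous_qMM_mu t h m).measurable.comp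
        (((hd.comp measurable_fst).mul (hd.comp measurable_snd)).div_const _)
    · intro h p
      exact mul_nonneg (my_W_nonneg hW _ _ _) (my_qMM_nonneg ht
        (div_nonneg (mul_nonneg (my_degW_nonneg hW _) (my_degW_nonneg hW _)) hρ.le) _ _)

lemma my_continuousOn_WtER (hW : IsMultigraphon W) (hρ : 0 < rhoW W)
    {x y : ℝ} (hx : x ∈ Icc (0:ℝ) 1) (hy : y ∈ Icc (0:ℝ) 1) (m : ℕ) :
    ContinuousOn (fun t : ℝ => WtER W t x y m) (Ici (0:ℝ)) := by
  unfold WtER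
  by_cases hxy : x = y
  · simp only [if_pos hxy]
    by_cases hm : 2 ∣ m
    · simp only [if_pos hm]
      subst hxy
      have hμ : 0 ≤ degW W x ^ 2 / (2 * rhoW W) :=
        div_nonneg (pow_nonneg (my_degW_nonneg hW x) 2) (by linarith)
      apply continuousOn_tsum (u := fun h => W x x (2 * h))
      · exact fun h => (continuous_const.mul (my_continuous_qMM_t h (m / 2) _)).continuousOn
      · exact my_summable_even hW hx
      · intro h t htI
        rw [Real.norm_eq_abs, abs_mul, abs_of_nonneg (my_W_nonneg hW _ _ _),
          abs_of_nonneg (my_qMM_nonneg htI hμ _ _)]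
        calc W x x (2 * h) * qMM t h (m / 2) (degW W x ^ 2 / (2 * rhoW W))
            ≤ W x x (2 * h) * 1 :=
              mul_le_mul_of_nonneg_left (my_qMM_le_one htI hμ _ _) (my_W_nonneg hW _ _ _)
          _ = _ := mul_one _
    · simp only [if_neg hm]
      exact continuousOn_const
  · simp only [if_neg hxy]
    have hμ : 0 ≤ degW W x * degW W y / rhoW W :=
      div_nonneg (mul_nonneg (my_degW_nonneg hW x) (my_degW_nonneg hW y)) hρ.le
    apply continuousOn_tsum (u := fun h => W x y h)
    · exact fun h => (continuous_const.mul (my_continuous_qMM_t h m _)).continuousOn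
    · exact my_summable_W hW hx hy
    · intro h t htI
      rw [Real.norm_eq_abs, abs_mul, abs_of_nonneg (my_W_nonneg hW _ _ _),
        abs_of_nonneg (my_qMM_nonneg htI hμ _ _)]
      calc W x y h * qMM t h m (degW W x * degW W y / rhoW W)
          ≤ W x y h * 1 :=
            mul_le_mul_of_nonneg_left (my_qMM_le_one htI hμ _ _) (my_W_nonneg hW _ _ _)
        _ = _ := mul_one _

end Helpers

/-- `t ↦ t_=(A, W_t)` is continuous on `[0,∞)` and `W_t → W` as `t → 0+`. -/
theorem Wt_continuous_and_initial
    (W : ℝ → ℝ → ℕ → ℝ) (hW : IsMultigraphon W) (κ : ℝ) (hκ : 0 < κ)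
    (hρpos : 0 < rhoW W) (hρfin : IntegrableOn (degW W) (Icc (0:ℝ) 1))
    (k : ℕ) (A : ℕ → ℕ → ℕ) (hA : IsAdjOn k A) :
    ContinuousOn (fun t : ℝ => tEqW k A (WtER W t)) (Ici (0:ℝ)) ∧
    Tendsto (fun t : ℝ => tEqW k A (WtER W t)) (𝓝[>] (0:ℝ)) (𝓝 (tEqW k A W)) := by
  have hS : MeasurableSet (Set.univ.pi fun _ : Fin k => Icc (0:ℝ) 1) :=
    MeasurableSet.univ_pi fun _ => measurableSet_Icc
  have hSfin : volume (Set.univ.pi fun _ : Fin k => Icc (0:ℝ) 1) < ∞ := by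
    rw [volume_pi_pi]
    simp [Real.volume_Icc]
  have hcont : ContinuousOn (fun t : ℝ => tEqW k A (WtER W t)) (Ici (0:ℝ)) := by
    unfold tEqW
    apply continuousOn_of_dominated (bound := fun _ => (1:ℝ))
    · intro t ht
      apply Measurable.aestronglyMeasurable
      apply Finset.measurable_prod
      intro i _
      apply Finset.measurable_prod
      intro j _
      have hpair : Measurable (fun x : Fin k → ℝ => (x i, x j)) :=
        (measurable_pi_apply i).prodMk (measurable_pi_apply j)
      have hc := (my_measurable_WtER hW hρpos ht (A i j)).comp hpair
      exact hc
    · intro t ht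
      filter_upwards [ae_restrict_mem hS] with x hx
      have hxI : ∀ i : Fin k, x i ∈ Icc (0:ℝ) 1 := fun i => hx i (mem_univ i)
      rw [Real.norm_eq_abs, abs_of_nonneg]
      · apply Finset.prod_le_one
        · intro i _
          exact Finset.prod_nonneg fun j _ => my_WtER_nonneg hW hρpos ht _ _ _
        · intro i _
          apply Finset.prod_le_one
          · intro j _
            exact my_WtER_nonneg hW hρpos ht _ _ _
          · intro j _
            exact my_WtER_le_one hW hρpos ht (hxI i) (hxI j) _
      · exact Finset.prod_nonneg fun i _ =>
          Finset.prod_nonneg fun j _ => my_WtER_nonneg hW hρpos ht _ _ _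
    · exact integrableOn_const hSfin.ne
    · filter_upwards [ae_restrict_mem hS] with x hx
      have hxI : ∀ i : Fin k, x i ∈ Icc (0:ℝ) 1 := fun i => hx i (mem_univ i)
      apply continuousOn_finset_prod
      intro i _
      apply continuousOn_finset_prod
      intro j _
      exact my_continuousOn_WtER hW hρpos (hxI i) (hxI j) (A i j)
  refine ⟨hcont, ?_⟩
  have h0 := hcont 0 self_mem_Ici
  rw [ContinuousWithinAt, my_WtER_zero hW] at h0
  exact h0.mono_left (nhdsWithin_mono 0 Ioi_subset_Ici_self)

end
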